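/- arXiv:2009.02509 — 2 statements merged into one kernel-verified Lean document; each statement's English description precedes it below -/
import Mathlib

section
/- Let K and K̃ be symmetric positive semidefinite n×n real matrices with rank K = rank K̃ = r and Im(K̃) = Im(K), let Δm ∈ Im(K), and let U ∈ ℝ^{n×r} have orthonormal columns spanning Im(K). Then D⁺(Δm, K̃ ∥ K) := (1/2)[Δmᵀ K⁺ Δm + log det(Uᵀ K U) − log det(Uᵀ K̃ U) + tr(K⁺ K̃) − r] satisfies D⁺(Δm, K̃ ∥ K) ≥ 0, with equality if and only if Δm = 0 and K̃ = K. -/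
open Matrix

/-- `B` is the Moore–Penrose pseudoinverse of `A`. -/
def IsMoorePenroseInv {a b : ℕ} (A : Matrix (Fin a) (Fin b) ℝ)
    (B : Matrix (Fin b) (Fin a) ℝ) : Prop :=
  A * B * A = A ∧ B * A * B = B ∧ (A * B)ᵀ = A * B ∧ (B * A)ᵀ = B * A

/-- Uniqueness of the Moore–Penrose pseudoinverse. -/
lemma mp_unique {n : ℕ} {A B C : Matrix (Fin n) (Fin n) ℝ}
    (hB : IsMoorePenroseInv A B) (hC : IsMoorePenroseInv A C) : B = C := by
  obtain ⟨b1, b2, b3, b4⟩ := hB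
  obtain ⟨c1, c2, c3, c4⟩ := hC
  have hAB : A * B = A * C := by
    calc A * B = (A * C * A) * B := by rw [c1]
      _ = (A * C) * (A * B) := by simp only [Matrix.mul_assoc]
      _ = (A * C)ᵀ * (A * B)ᵀ := by rw [c3, b3]
      _ = Cᵀ * (A * B * A)ᵀ := by simp only [transpose_mul, Matrix.mul_assoc]
      _ = Cᵀ * Aᵀ := by rw [b1]
      _ = (A * C)ᵀ := (transpose_mul _ _).symm
      _ = A * C := c3
  have hBA : B * A = C * A := by
    calc B * A = B * (A * C * A) := by rw [c1]
      _ = (B * A) * (C * A) := by simp only [Matrix.mul_assoc]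
      _ = (B * A)ᵀ * (C * A)ᵀ := by rw [b4, c4]
      _ = (A * B * A)ᵀ * Cᵀ := by simp only [transpose_mul, Matrix.mul_assoc]
      _ = Aᵀ * Cᵀ := by rw [b1]
      _ = (C * A)ᵀ := (transpose_mul _ _).symm
      _ = C * A := c4
  calc B = B * A * B := b2.symm
    _ = B * (A * C) := by rw [Matrix.mul_assoc, hAB]
    _ = (B * A) * C := by rw [Matrix.mul_assoc]
    _ = (C * A) * C := by rw [hBA]
    _ = C := c2

lemma eq_of_mulVec_eq' {m n : ℕ} {M N : Matrix (Fin m) (Fin n) ℝ}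
    (h : ∀ x, M *ᵥ x = N *ᵥ x) : M = N :=
  Matrix.toLin'.injective (LinearMap.ext fun x => by
    rw [Matrix.toLin'_apply, Matrix.toLin'_apply, h])

/-- `tr M ≥ r + log det M` for positive definite `M`, with equality iff `M = 1`. -/
lemma trace_logdet_core {r : ℕ} {M : Matrix (Fin r) (Fin r) ℝ} (hM : M.PosDef) :
    (r : ℝ) + Real.log M.det ≤ M.trace ∧
    (M.trace = (r : ℝ) + Real.log M.det ↔ M = 1) := by
  classical
  have hH := hM.isHermitian
  set lam := hH.eigenvalues with hlam
  have hpos : ∀ i, 0 < lam i := hM.eigenvalues_pos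
  set V : Matrix (Fin r) (Fin r) ℝ := (hH.eigenvectorUnitary : Matrix (Fin r) (Fin r) ℝ)
    with hV
  have hVV : V * star V = 1 := (Matrix.mem_unitaryGroup_iff).mp hH.eigenvectorUnitary.2
  have hVV' : star V * V = 1 := (Matrix.mem_unitaryGroup_iff').mp hH.eigenvectorUnitary.2
  have hspec : M = V * Matrix.diagonal lam * star V := by
    have := hH.spectral_theorem
    rwa [RCLike.ofReal_real_eq_id, Function.id_comp] at this
  have htrace : M.trace = ∑ i, lam i := by
    conv_lhs => rw [hspec]
    rw [Matrix.trace_mul_cycle, hVV', one_mul, Matrix.trace_diagonal]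
  have hdet : M.det = ∏ i, lam i := by
    have := hH.det_eq_prod_eigenvalues
    simpa using this
  have hlogdet : Real.log M.det = ∑ i, Real.log (lam i) := by
    rw [hdet, Real.log_prod (fun i _ => (hpos i).ne')]
  have key : M.trace - ((r : ℝ) + Real.log M.det)
      = ∑ i, (lam i - 1 - Real.log (lam i)) := by
    rw [htrace, hlogdet, Finset.sum_sub_distrib, Finset.sum_sub_distrib]
    simp [Finset.card_univ]
    ring
  have hterm : ∀ i ∈ Finset.univ, (0:ℝ) ≤ lam i - 1 - Real.log (lam i) := fun i _ => by
    have := Real.log_le_sub_one_of_pos (hpos i); linarith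
  have hsumnn : 0 ≤ ∑ i, (lam i - 1 - Real.log (lam i)) := Finset.sum_nonneg hterm
  constructor
  · linarith [key]
  constructor
  · intro h
    have hsum0 : ∑ i, (lam i - 1 - Real.log (lam i)) = 0 := by
      rw [← key]; linarith
    have hall := (Finset.sum_eq_zero_iff_of_nonneg hterm).mp hsum0
    have hone : ∀ i, lam i = 1 := by
      intro i
      by_contra hne
      have h1 := Real.log_lt_sub_one_of_pos (hpos i) hne
      have h0 := hall i (Finset.mem_univ i)
      linarith
    have hdiag : Matrix.diagonal lam = (1 : Matrix (Fin r) (Fin r) ℝ) := by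
      have : lam = fun _ => (1:ℝ) := funext hone
      rw [this, Matrix.diagonal_one]
    rw [hspec, hdiag, mul_one, hVV]
  · rintro rfl
    simp

open scoped MatrixOrder in
/-- The square root of a positive definite matrix is positive definite. -/
lemma posDef_sqrt' {r : ℕ} {A : Matrix (Fin r) (Fin r) ℝ} (hA : A.PosDef) :
    (CFC.sqrt A).PosDef := by
  have hpsd : (CFC.sqrt A).PosSemidef := (CFC.sqrt_nonneg A).posSemidef
  refine PosDef.of_dotProduct_mulVec_pos hpsd.isHermitian fun x hx => ?_
  rcases lt_or_eq_of_le (hpsd.dotProduct_mulVec_nonneg x) with h | h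
  · exact h
  exfalso
  have h0 : CFC.sqrt A *ᵥ x = 0 :=
    (hpsd.dotProduct_mulVec_zero_iff x).mp h.symm
  have hAx : A *ᵥ x = 0 := by
    rw [← CFC.sqrt_mul_sqrt_self A hA.posSemidef.nonneg, ← mulVec_mulVec, h0, mulVec_zero]
  have := hA.dotProduct_mulVec_pos hx
  rw [hAx, dotProduct_zero] at this
  exact lt_irrefl 0 this

open scoped MatrixOrder in
/-- Core KL inequality for positive definite matrices. -/
lemma kl_core {r : ℕ} {A B : Matrix (Fin r) (Fin r) ℝ} (hA : A.PosDef) (hB : B.PosDef) :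
    0 ≤ Real.log A.det - Real.log B.det + (A⁻¹ * B).trace - (r : ℝ) ∧
    (Real.log A.det - Real.log B.det + (A⁻¹ * B).trace - (r : ℝ) = 0 ↔ B = A) := by
  classical
  set S := CFC.sqrt A with hSdef
  have hS : S.PosDef := posDef_sqrt' hA
  have hSS : S * S = A := CFC.sqrt_mul_sqrt_self A hA.posSemidef.nonneg
  have hSdet : IsUnit S.det := hS.det_pos.ne'.isUnit
  have hSiS : S⁻¹ * S = 1 := nonsing_inv_mul S hSdet
  have hSSi : S * S⁻¹ = 1 := mul_nonsing_inv S hSdet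
  have hSi : (S⁻¹).PosDef := hS.inv
  have hSiH : (S⁻¹)ᴴ = S⁻¹ := hSi.isHermitian
  set M := S⁻¹ * B * S⁻¹ with hMdef
  have hMpsd : M.PosSemidef := by
    have := hB.posSemidef.conjTranspose_mul_mul_same (S⁻¹)
    rwa [hSiH] at this
  have hMpd : M.PosDef := by
    refine PosDef.of_dotProduct_mulVec_pos hMpsd.isHermitian fun x hx => ?_
    rcases lt_or_eq_of_le (hMpsd.dotProduct_mulVec_nonneg x) with h | h
    · exact h
    exfalso
    have h0 : M *ᵥ x = 0 := (hMpsd.dotProduct_mulVec_zero_iff x).mp h.symm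
    have hBy : B *ᵥ (S⁻¹ *ᵥ x) = 0 := by
      have : S *ᵥ (M *ᵥ x) = 0 := by rw [h0, mulVec_zero]
      rw [hMdef, ← mulVec_mulVec, ← mulVec_mulVec, mulVec_mulVec,
        mulVec_mulVec, hSSi] at this
      simpa using this
    have hy : S⁻¹ *ᵥ x ≠ 0 := by
      intro h0'
      apply hx
      have : S *ᵥ (S⁻¹ *ᵥ x) = x := by rw [mulVec_mulVec, hSSi, one_mulVec]
      rw [h0', mulVec_zero] at this
      exact this.symm
    have := hB.dotProduct_mulVec_pos hy
    rw [hBy, dotProduct_zero] at this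
    exact lt_irrefl 0 this
  have hAinv : A⁻¹ = S⁻¹ * S⁻¹ := by rw [← hSS, Matrix.mul_inv_rev]
  have htr : (A⁻¹ * B).trace = M.trace := by
    rw [hAinv, hMdef, Matrix.mul_assoc, Matrix.trace_mul_comm]
  have hAdet : A.det = S.det * S.det := by rw [← hSS, det_mul]
  have hSdp : (0:ℝ) < S.det := hS.det_pos
  have hAdp : (0:ℝ) < A.det := hA.det_pos
  have hBdp : (0:ℝ) < B.det := hB.det_pos
  have hMdet : M.det = B.det / A.det := by
    rw [hMdef, det_mul, det_mul, det_nonsing_inv, Ring.inverse_eq_inv', hAdet]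
    field_simp
  have hlogM : Real.log M.det = Real.log B.det - Real.log A.det := by
    rw [hMdet, Real.log_div hBdp.ne' hAdp.ne']
  have hmain := trace_logdet_core hMpd
  have hBM : B = S * M * S := by
    rw [hMdef]
    calc B = (S * S⁻¹) * B * (S⁻¹ * S) := by rw [hSSi, hSiS, one_mul, mul_one]
      _ = S * (S⁻¹ * B * S⁻¹) * S := by simp only [Matrix.mul_assoc]
  have hiff : M = 1 ↔ B = A := by
    constructor
    · intro h1
      rw [hBM, h1, mul_one, hSS]
    · intro hBA
      rw [hMdef, hBA, ← hSS]
      calc S⁻¹ * (S * S) * S⁻¹ = (S⁻¹ * S) * (S * S⁻¹) := by simp only [Matrix.mul_assoc]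
        _ = 1 := by rw [hSiS, hSSi, one_mul]
  constructor
  · have := hmain.1
    rw [htr]
    linarith [hlogM]
  · rw [htr]
    constructor
    · intro h
      apply hiff.mp
      apply hmain.2.mp
      linarith [hlogM]
    · intro hBA
      have : M = 1 := hiff.mpr hBA
      have h2 := hmain.2.mpr this
      linarith [hlogM]

/-- Compression of a PSD matrix whose range contains the range of `U` is positive definite. -/
lemma compress_posDef {n r : ℕ} {L : Matrix (Fin n) (Fin n) ℝ} (hL : L.PosSemidef)
    {U : Matrix (Fin n) (Fin r) ℝ} (hU : Uᵀ * U = 1)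
    (hrange : ∀ x : Fin r → ℝ, ∃ y, L *ᵥ y = U *ᵥ x) :
    (Uᵀ * L * U).PosDef := by
  have hherm : (Uᵀ * L * U).IsHermitian := by
    have := (hL.conjTranspose_mul_mul_same U).isHermitian
    rwa [conjTranspose_eq_transpose_of_trivial] at this
  refine PosDef.of_dotProduct_mulVec_pos hherm fun x hx => ?_
  have hUx : Uᵀ *ᵥ (U *ᵥ x) = x := by rw [mulVec_mulVec, hU, one_mulVec]
  have hUxne : U *ᵥ x ≠ 0 := by
    intro h0; apply hx; rw [← hUx, h0, mulVec_zero]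
  have key : x ⬝ᵥ ((Uᵀ * L * U) *ᵥ x) = (U *ᵥ x) ⬝ᵥ (L *ᵥ (U *ᵥ x)) := by
    rw [← mulVec_mulVec, ← mulVec_mulVec, dotProduct_mulVec x Uᵀ _, vecMul_transpose]
  have hpsd : (Uᵀ * L * U).PosSemidef := by
    have := hL.conjTranspose_mul_mul_same U
    rwa [conjTranspose_eq_transpose_of_trivial] at this
  rcases lt_or_eq_of_le (hpsd.dotProduct_mulVec_nonneg x) with h | h
  · exact h
  exfalso
  have h0 : (Uᵀ * L * U) *ᵥ x = 0 := (hpsd.dotProduct_mulVec_zero_iff x).mp h.symm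
  have hLUx : L *ᵥ (U *ᵥ x) = 0 := by
    have hLval : (U *ᵥ x) ⬝ᵥ (L *ᵥ (U *ᵥ x)) = 0 := by
      rw [← key, h0, dotProduct_zero]
    have := (hL.dotProduct_mulVec_zero_iff (U *ᵥ x)).mp (by simpa using hLval)
    exact this
  obtain ⟨y, hy⟩ := hrange x
  have hdot : (U *ᵥ x) ⬝ᵥ (U *ᵥ x) = 0 := by
    have hLt : Lᵀ = L := by
      have := hL.isHermitian.eq
      rwa [conjTranspose_eq_transpose_of_trivial] at this
    calc (U *ᵥ x) ⬝ᵥ (U *ᵥ x) = (U *ᵥ x) ⬝ᵥ (L *ᵥ y) := by rw [hy]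
      _ = ((U *ᵥ x) ᵥ* L) ⬝ᵥ y := by rw [dotProduct_mulVec]
      _ = (Lᵀ *ᵥ (U *ᵥ x)) ⬝ᵥ y := by rw [mulVec_transpose]
      _ = (0:Fin n → ℝ) ⬝ᵥ y := by rw [hLt, hLUx]
      _ = 0 := zero_dotProduct y
  exact hUxne (dotProduct_self_eq_zero.mp hdot)

/-- Degenerate (low-rank) Gaussian Kullback–Leibler functional:
nonnegativity and the equality case. -/
theorem degenerate_gaussian_kl_nonneg_and_eq_zero_iff {n r : ℕ}
    (K Kt Kp : Matrix (Fin n) (Fin n) ℝ)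
    (hK : K.PosSemidef) (hKt : Kt.PosSemidef)
    (hrK : K.rank = r) (hrKt : Kt.rank = r)
    (hIm : LinearMap.range Kt.mulVecLin = LinearMap.range K.mulVecLin)
    (hKp : IsMoorePenroseInv K Kp)
    (Δm : Fin n → ℝ) (hΔm : Δm ∈ LinearMap.range K.mulVecLin)
    (U : Matrix (Fin n) (Fin r) ℝ) (hU : Uᵀ * U = 1)
    (hUIm : LinearMap.range U.mulVecLin = LinearMap.range K.mulVecLin) :
    0 ≤ (1 / 2 : ℝ) * (Δm ⬝ᵥ (Kp *ᵥ Δm) + Real.log (Uᵀ * K * U).det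
        - Real.log (Uᵀ * Kt * U).det + (Kp * Kt).trace - (r : ℝ)) ∧
    ((1 / 2 : ℝ) * (Δm ⬝ᵥ (Kp *ᵥ Δm) + Real.log (Uᵀ * K * U).det
        - Real.log (Uᵀ * Kt * U).det + (Kp * Kt).trace - (r : ℝ)) = 0 ↔
      Δm = 0 ∧ Kt = K) := by
  classical
  -- basic facts about U
  have hUcancel : ∀ (X : Matrix (Fin r) (Fin n) ℝ), Uᵀ * (U * X) = X := fun X => by
    rw [← Matrix.mul_assoc, hU, Matrix.one_mul]
  have hUU : ∀ x : Fin r → ℝ, Uᵀ *ᵥ (U *ᵥ x) = x := fun x => by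
    rw [mulVec_mulVec, hU, one_mulVec]
  have hPfix : ∀ v ∈ LinearMap.range K.mulVecLin, (U * Uᵀ) *ᵥ v = v := by
    intro v hv
    rw [← hUIm] at hv
    obtain ⟨x, hx⟩ := hv
    rw [Matrix.mulVecLin_apply] at hx
    rw [← hx, ← mulVec_mulVec, hUU]
  have hPK : (U * Uᵀ) * K = K := eq_of_mulVec_eq' fun v => by
    rw [← mulVec_mulVec]
    exact hPfix (K *ᵥ v) ⟨v, by simp⟩
  have hPKt : (U * Uᵀ) * Kt = Kt := eq_of_mulVec_eq' fun v => by
    rw [← mulVec_mulVec]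
    exact hPfix (Kt *ᵥ v) (by rw [← hIm]; exact ⟨v, by simp⟩)
  have hKsym : Kᵀ = K := by
    have := hK.isHermitian.eq
    rwa [conjTranspose_eq_transpose_of_trivial] at this
  have hKtsym : Ktᵀ = Kt := by
    have := hKt.isHermitian.eq
    rwa [conjTranspose_eq_transpose_of_trivial] at this
  have hPsym : (U * Uᵀ)ᵀ = U * Uᵀ := by rw [transpose_mul, transpose_transpose]
  have hKP : K * (U * Uᵀ) = K := by
    have h := congrArg Matrix.transpose hPK
    rwa [transpose_mul, hPsym, hKsym] at h
  have hKtP : Kt * (U * Uᵀ) = Kt := by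
    have h := congrArg Matrix.transpose hPKt
    rwa [transpose_mul, hPsym, hKtsym] at h
  have hPΔ : (U * Uᵀ) *ᵥ Δm = Δm := hPfix Δm hΔm
  set A := Uᵀ * K * U with hAdef
  set B := Uᵀ * Kt * U with hBdef
  have hKA : U * A * Uᵀ = K := by
    calc U * A * Uᵀ = (U * Uᵀ) * (K * (U * Uᵀ)) := by
          rw [hAdef]; simp only [Matrix.mul_assoc]
      _ = (U * Uᵀ) * K := by rw [hKP]
      _ = K := hPK
  have hKtB : U * B * Uᵀ = Kt := by
    calc U * B * Uᵀ = (U * Uᵀ) * (Kt * (U * Uᵀ)) := by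
          rw [hBdef]; simp only [Matrix.mul_assoc]
      _ = (U * Uᵀ) * Kt := by rw [hKtP]
      _ = Kt := hPKt
  have hApd : A.PosDef := by
    refine compress_posDef hK hU ?_
    intro x
    have hmem : U *ᵥ x ∈ LinearMap.range K.mulVecLin := by
      rw [← hUIm]; exact ⟨x, by simp⟩
    obtain ⟨y, hy⟩ := hmem
    exact ⟨y, by simpa using hy⟩
  have hBpd : B.PosDef := by
    refine compress_posDef hKt hU ?_
    intro x
    have hmem : U *ᵥ x ∈ LinearMap.range Kt.mulVecLin := by
      rw [hIm, ← hUIm]; exact ⟨x, by simp⟩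
    obtain ⟨y, hy⟩ := hmem
    exact ⟨y, by simpa using hy⟩
  have hAu : IsUnit A.det := hApd.det_pos.ne'.isUnit
  have hAAi : A * A⁻¹ = 1 := mul_nonsing_inv A hAu
  have hAiA : A⁻¹ * A = 1 := nonsing_inv_mul A hAu
  -- identify the Moore-Penrose inverse
  have hKKp' : K * (U * A⁻¹ * Uᵀ) = U * Uᵀ := by
    calc K * (U * A⁻¹ * Uᵀ) = U * (A * (Uᵀ * (U * (A⁻¹ * Uᵀ)))) := by
          rw [← hKA]; simp only [Matrix.mul_assoc]
      _ = U * (A * (A⁻¹ * Uᵀ)) := by rw [hUcancel]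
      _ = U * Uᵀ := by rw [← Matrix.mul_assoc A A⁻¹ Uᵀ, hAAi, Matrix.one_mul]
  have hKp'K : (U * A⁻¹ * Uᵀ) * K = U * Uᵀ := by
    calc (U * A⁻¹ * Uᵀ) * K = U * (A⁻¹ * (Uᵀ * (U * (A * Uᵀ)))) := by
          rw [← hKA]; simp only [Matrix.mul_assoc]
      _ = U * (A⁻¹ * (A * Uᵀ)) := by rw [hUcancel]
      _ = U * Uᵀ := by rw [← Matrix.mul_assoc A⁻¹ A Uᵀ, hAiA, Matrix.one_mul]
  have hKp' : IsMoorePenroseInv K (U * A⁻¹ * Uᵀ) := by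
    refine ⟨?_, ?_, ?_, ?_⟩
    · rw [hKKp', hPK]
    · rw [hKp'K]
      calc (U * Uᵀ) * (U * A⁻¹ * Uᵀ) = U * (Uᵀ * (U * (A⁻¹ * Uᵀ))) := by
            simp only [Matrix.mul_assoc]
        _ = U * (A⁻¹ * Uᵀ) := by rw [hUcancel]
        _ = U * A⁻¹ * Uᵀ := by rw [← Matrix.mul_assoc U A⁻¹ Uᵀ]
    · rw [hKKp', hPsym]
    · rw [hKp'K, hPsym]
  have hKpEq : Kp = U * A⁻¹ * Uᵀ := mp_unique hKp hKp'
  -- quadratic form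
  set x := Uᵀ *ᵥ Δm with hxdef
  have hΔx : U *ᵥ x = Δm := by rw [hxdef, mulVec_mulVec]; exact hPΔ
  have hquad : Δm ⬝ᵥ (Kp *ᵥ Δm) = x ⬝ᵥ (A⁻¹ *ᵥ x) := by
    rw [hKpEq, ← mulVec_mulVec, ← mulVec_mulVec, dotProduct_mulVec Δm U _,
      ← mulVec_transpose]
  have hq0 : 0 ≤ x ⬝ᵥ (A⁻¹ *ᵥ x) := by
    have := hApd.inv.posSemidef.dotProduct_mulVec_nonneg x
    simpa using this
  have hqz : x ⬝ᵥ (A⁻¹ *ᵥ x) = 0 ↔ Δm = 0 := by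
    constructor
    · intro h
      have h0 : A⁻¹ *ᵥ x = 0 :=
        (hApd.inv.posSemidef.dotProduct_mulVec_zero_iff x).mp (by simpa using h)
      have hx0 : x = 0 := by
        have : A *ᵥ (A⁻¹ *ᵥ x) = x := by rw [mulVec_mulVec, hAAi, one_mulVec]
        rw [h0, mulVec_zero] at this
        exact this.symm
      rw [← hΔx, hx0, mulVec_zero]
    · intro h
      have hx0 : x = 0 := by rw [hxdef, h, mulVec_zero]
      rw [hx0]
      simp
  -- trace
  have htrace : (Kp * Kt).trace = (A⁻¹ * B).trace := by
    rw [hKpEq, ← hKtB]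
    have hmul : (U * A⁻¹ * Uᵀ) * (U * B * Uᵀ) = U * (A⁻¹ * B * Uᵀ) := by
      calc (U * A⁻¹ * Uᵀ) * (U * B * Uᵀ) = U * (A⁻¹ * (Uᵀ * (U * (B * Uᵀ)))) := by
            simp only [Matrix.mul_assoc]
        _ = U * (A⁻¹ * (B * Uᵀ)) := by rw [hUcancel]
        _ = U * (A⁻¹ * B * Uᵀ) := by simp only [Matrix.mul_assoc]
    rw [hmul, Matrix.trace_mul_comm]
    congr 1
    calc (A⁻¹ * B * Uᵀ) * U = (A⁻¹ * B) * (Uᵀ * U) := by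
          rw [Matrix.mul_assoc (A⁻¹ * B) Uᵀ U]
      _ = A⁻¹ * B := by rw [hU, mul_one]
  obtain ⟨hg0, hgiff⟩ := kl_core hApd hBpd
  have hEeq : Δm ⬝ᵥ (Kp *ᵥ Δm) + Real.log A.det - Real.log B.det
      + (Kp * Kt).trace - (r : ℝ)
      = (x ⬝ᵥ (A⁻¹ *ᵥ x))
        + (Real.log A.det - Real.log B.det + (A⁻¹ * B).trace - (r : ℝ)) := by
    rw [hquad, htrace]; ring
  constructor
  · rw [hEeq]
    linarith
  · rw [hEeq]
    constructor
    · intro h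
      have hsum : (x ⬝ᵥ (A⁻¹ *ᵥ x))
          + (Real.log A.det - Real.log B.det + (A⁻¹ * B).trace - (r : ℝ)) = 0 := by
        linarith
      have h1 : x ⬝ᵥ (A⁻¹ *ᵥ x) = 0 := by linarith
      have h2 : Real.log A.det - Real.log B.det + (A⁻¹ * B).trace - (r : ℝ) = 0 := by
        linarith
      refine ⟨hqz.mp h1, ?_⟩
      have hBA : B = A := hgiff.mp h2
      rw [← hKtB, hBA, hKA]
    · rintro ⟨h1, h2⟩
      have hx0 : x = 0 := by rw [hxdef, h1, mulVec_zero]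
      have hBA : B = A := by rw [hBdef, hAdef, h2]
      have hg := hgiff.mpr hBA
      have hq : x ⬝ᵥ (A⁻¹ *ᵥ x) = 0 := by rw [hx0]; simp
      rw [hq, hg]
      ring
end

section
/- Let P be a symmetric positive semidefinite n×n real matrix, let H ∈ ℝ^{q×n} have full row rank with Im(Hᵀ) ⊆ Im(P), and let P⁺ be the Moore–Penrose pseudoinverse of P. Then the q×q matrix H P⁺ Hᵀ is symmetric positive definite (in particular invertible). -/
open Matrix

/-- If `P` is symmetric positive semidefinite, `H` has full row rank and
`Im(Hᵀ) ⊆ Im(P)`, then `H P⁺ Hᵀ` is symmetric positive definite. -/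
theorem HPplusHT_posDef {n q : ℕ}
    (P Pp : Matrix (Fin n) (Fin n) ℝ) (hP : P.PosSemidef)
    (hPp : IsMoorePenroseInv P Pp)
    (H : Matrix (Fin q) (Fin n) ℝ) (hH : H.rank = q)
    (hIm : LinearMap.range Hᵀ.mulVecLin ≤ LinearMap.range P.mulVecLin) :
    (H * Pp * Hᵀ).PosDef := by
  -- choose preimages for the columns of Hᵀ
  have hcol : ∀ i : Fin q, ∃ v : Fin n → ℝ, P *ᵥ v = Hᵀ *ᵥ Pi.single i 1 := by
    intro i
    obtain ⟨v, hv⟩ := hIm ⟨Pi.single i 1, rfl⟩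
    exact ⟨v, hv⟩
  choose v hv using hcol
  set K : Matrix (Fin n) (Fin q) ℝ := Matrix.of fun r i => v i r with hK
  have hPK : P * K = Hᵀ := by
    ext j i
    have h := hv i
    rw [mulVec_single_one] at h
    have := congrFun h j
    simpa [Matrix.mul_apply, hK, mulVec, dotProduct] using this
  have hPt : Pᵀ = P := (by simpa using hP.1 : P.IsSymm).eq
  -- symmetrize
  have hHPpH : H * Pp * Hᵀ = Kᵀ * P * K := by
    have hH' : H = Kᵀ * P := by
      calc H = Hᵀᵀ := (transpose_transpose H).symm
      _ = (P * K)ᵀ := by rw [hPK]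
      _ = Kᵀ * Pᵀ := by rw [transpose_mul]
      _ = Kᵀ * P := by rw [hPt]
    have e1 : H * Pp * Hᵀ = Kᵀ * (P * Pp * P) * K := by
      rw [← hPK, hH']; simp [Matrix.mul_assoc]
    rw [e1, hPp.1]
  rw [hHPpH]
  -- Hᵀ has trivial kernel
  have hker : LinearMap.ker Hᵀ.mulVecLin = ⊥ := by
    have h1 : Module.finrank ℝ (LinearMap.range Hᵀ.mulVecLin) = q := by
      have : Hᵀ.rank = q := by rw [Matrix.rank_transpose, hH]
      simpa [Matrix.rank] using this
    have h2 := LinearMap.finrank_range_add_finrank_ker Hᵀ.mulVecLin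
    rw [h1] at h2
    have : Module.finrank ℝ (LinearMap.ker Hᵀ.mulVecLin) = 0 := by
      have : Module.finrank ℝ (Fin q → ℝ) = q := by simp
      omega
    exact Submodule.finrank_eq_zero.mp this
  have hsd : (Kᵀ * P * K).PosSemidef := by
    have := hP.mul_mul_conjTranspose_same Kᵀ
    simpa using this
  refine posDef_iff_dotProduct_mulVec.mpr ⟨hsd.1, fun x hx => ?_⟩
  have hle := hsd.dotProduct_mulVec_nonneg x
  rcases lt_or_eq_of_le hle with h | h
  · simpa using h
  have h0 : star (K *ᵥ x) ⬝ᵥ P *ᵥ (K *ᵥ x) = 0 := by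
    have : x ⬝ᵥ (Kᵀ * P * K) *ᵥ x = (K *ᵥ x) ⬝ᵥ P *ᵥ (K *ᵥ x) := by
      rw [← mulVec_mulVec, ← mulVec_mulVec, dotProduct_mulVec x Kᵀ, vecMul_transpose]
    simp only [star_trivial] at h ⊢
    rw [this] at h
    exact h.symm
  have hPz : P *ᵥ (K *ᵥ x) = 0 := (hP.dotProduct_mulVec_zero_iff _).mp h0
  have hHx : Hᵀ *ᵥ x = 0 := by
    rw [← hPK, ← mulVec_mulVec]; exact hPz
  have : x = 0 := by
    have := LinearMap.ker_eq_bot.mp hker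
    exact this (by rw [Matrix.mulVecLin_apply, Matrix.mulVecLin_apply, mulVec_zero]; exact hHx)
  exact absurd this hx
end
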